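/- The function N(z,t) = (|z|⁴ + t²)^{−1/2} (the inverse square of the Korányi norm) is harmonic for the Heisenberg sublaplacian away from the origin: for every (z,t) ∈ ℂ×ℝ with (z,t) ≠ (0,0), X(X N)(z,t) + Y(Y N)(z,t) = 0. (This expresses that a constant multiple of |·|_K^{−2} is the fundamental solution of −Δ_b on H¹.) -/

import Mathlib

open MeasureTheory Real

/-- The left-invariant Heisenberg vector field `X f = ∂f/∂x + 2y ∂f/∂t`. -/
noncomputable def heisX (f : ℂ × ℝ → ℝ) (p : ℂ × ℝ) : ℝ :=
  fderiv ℝ f p ((1 : ℂ), (0 : ℝ)) + 2 * p.1.im * fderiv ℝ f p ((0 : ℂ), (1 : ℝ))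

/-- The left-invariant Heisenberg vector field `Y f = ∂f/∂y − 2x ∂f/∂t`. -/
noncomputable def heisY (f : ℂ × ℝ → ℝ) (p : ℂ × ℝ) : ℝ :=
  fderiv ℝ f p (Complex.I, (0 : ℝ)) - 2 * p.1.re * fderiv ℝ f p ((0 : ℂ), (1 : ℝ))

/-- The inverse square of the Korányi norm: `N(z,t) = (|z|⁴ + t²)^{-1/2}`. -/
noncomputable def koranyiInvSq (p : ℂ × ℝ) : ℝ :=
  (‖p.1‖ ^ 4 + p.2 ^ 2) ^ (-(1 / 2 : ℝ))

noncomputable def dxL : ℂ × ℝ →L[ℝ] ℝ := Complex.reCLM.comp (ContinuousLinearMap.fst ℝ ℂ ℝ)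
noncomputable def dyL : ℂ × ℝ →L[ℝ] ℝ := Complex.imCLM.comp (ContinuousLinearMap.fst ℝ ℂ ℝ)
noncomputable def dtL : ℂ × ℝ →L[ℝ] ℝ := ContinuousLinearMap.snd ℝ ℂ ℝ

@[simp] lemma dxL_apply (v : ℂ × ℝ) : dxL v = v.1.re := rfl
@[simp] lemma dyL_apply (v : ℂ × ℝ) : dyL v = v.1.im := rfl
@[simp] lemma dtL_apply (v : ℂ × ℝ) : dtL v = v.2 := rfl

noncomputable def qf (p : ℂ × ℝ) : ℝ := (p.1.re * p.1.re + p.1.im * p.1.im) * (p.1.re * p.1.re + p.1.im * p.1.im) + p.2 * p.2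

noncomputable def dqL (p : ℂ × ℝ) : ℂ × ℝ →L[ℝ] ℝ :=
  (4 * (p.1.re * p.1.re + p.1.im * p.1.im) * p.1.re) • dxL
  + (4 * (p.1.re * p.1.re + p.1.im * p.1.im) * p.1.im) • dyL + (2 * p.2) • dtL

lemma hx (p : ℂ × ℝ) : HasFDerivAt (fun p : ℂ × ℝ => p.1.re) dxL p := dxL.hasFDerivAt
lemma hy (p : ℂ × ℝ) : HasFDerivAt (fun p : ℂ × ℝ => p.1.im) dyL p := dyL.hasFDerivAt
lemma ht (p : ℂ × ℝ) : HasFDerivAt (fun p : ℂ × ℝ => p.2) dtL p := dtL.hasFDerivAt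

lemma hqf (p : ℂ × ℝ) : HasFDerivAt qf (dqL p) p := by
  have h := (((((hx p).mul (hx p)).add ((hy p).mul (hy p))).mul (((hx p).mul (hx p)).add ((hy p).mul (hy p)))).add ((ht p).mul (ht p)))
  refine h.congr_fderiv (ContinuousLinearMap.ext fun v => ?_)
  simp [dqL, ContinuousLinearMap.add_apply, ContinuousLinearMap.smul_apply, ContinuousLinearMap.comp_apply, ContinuousLinearMap.inl_apply, ContinuousLinearMap.inr_apply]
  ring

lemma qf_pos {p : ℂ × ℝ} (hp : p ≠ 0) : 0 < qf p := by
  unfold qf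
  rcases eq_or_ne p.1 0 with h1 | h1
  · have h2 : p.2 ≠ 0 := fun h2 => hp (Prod.ext h1 h2)
    have := mul_self_pos.2 h2
    nlinarith [mul_self_nonneg (p.1.re * p.1.re + p.1.im * p.1.im)]
  · have h3 : p.1.re ≠ 0 ∨ p.1.im ≠ 0 := by
      by_contra h; push_neg at h
      exact h1 (Complex.ext h.1 h.2)
    have h4 : 0 < p.1.re * p.1.re + p.1.im * p.1.im := by
      rcases h3 with h | h
      · nlinarith [mul_self_pos.2 h, mul_self_nonneg p.1.im]
      · nlinarith [mul_self_pos.2 h, mul_self_nonneg p.1.re]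
    nlinarith [mul_self_nonneg p.2]

lemma hqf_rpow (c : ℝ) {p : ℂ × ℝ} (hp : p ≠ 0) :
    HasFDerivAt (fun p => qf p ^ c) ((c * qf p ^ (c - 1)) • dqL p) p :=
  (Real.hasDerivAt_rpow_const (Or.inl (qf_pos hp).ne')).comp_hasFDerivAt p (hqf p)

lemma koranyi_eq : koranyiInvSq = fun p => qf p ^ (-(1 / 2 : ℝ)) := by
  funext p
  have h2 : ‖p.1‖ ^ 2 = p.1.re * p.1.re + p.1.im * p.1.im := by
    rw [Complex.sq_norm, Complex.normSq_apply]
  simp only [koranyiInvSq, qf]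
  congr 1
  nlinarith [h2, sq_nonneg p.2]

noncomputable def g1 (p : ℂ × ℝ) : ℝ :=
  qf p ^ (-(3 / 2 : ℝ)) * (-2) * ((p.1.re * p.1.re + p.1.im * p.1.im) * p.1.re + p.1.im * p.2)

noncomputable def g2 (p : ℂ × ℝ) : ℝ :=
  qf p ^ (-(3 / 2 : ℝ)) * (-2) * ((p.1.re * p.1.re + p.1.im * p.1.im) * p.1.im - p.1.re * p.2)

lemma heisX_eq {p : ℂ × ℝ} (hp : p ≠ 0) : heisX koranyiInvSq p = g1 p := by
  have h := hqf_rpow (-(1 / 2)) hp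
  have e : (-(1 / 2 : ℝ)) - 1 = -(3 / 2 : ℝ) := by norm_num
  rw [heisX, koranyi_eq, h.fderiv]
  simp only [dqL, g1, e, ContinuousLinearMap.add_apply, ContinuousLinearMap.smul_apply,
    dxL_apply, dyL_apply, dtL_apply, smul_eq_mul]
  norm_num
  ring

lemma heisY_eq {p : ℂ × ℝ} (hp : p ≠ 0) : heisY koranyiInvSq p = g2 p := by
  have h := hqf_rpow (-(1 / 2)) hp
  have e : (-(1 / 2 : ℝ)) - 1 = -(3 / 2 : ℝ) := by norm_num
  rw [heisY, koranyi_eq, h.fderiv]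
  simp only [dqL, g2, e, ContinuousLinearMap.add_apply, ContinuousLinearMap.smul_apply,
    dxL_apply, dyL_apply, dtL_apply, smul_eq_mul]
  norm_num [Complex.I_re, Complex.I_im]
  ring

/-- `N(z,t) = (|z|⁴ + t²)^{-1/2}` is harmonic for the Heisenberg
sublaplacian away from the origin: `X(XN) + Y(YN) = 0` at every `(z,t) ≠ (0,0)`. -/
theorem koranyiInvSq_harmonic :
    ∀ p : ℂ × ℝ, p ≠ (0, 0) →
      heisX (heisX koranyiInvSq) p + heisY (heisY koranyiInvSq) p = 0 := by
  intro p hp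
  have hp0 : p ≠ 0 := hp
  have hmem : {q : ℂ × ℝ | q ≠ 0} ∈ nhds p := isOpen_ne.mem_nhds hp0
  have hfx : fderiv ℝ (heisX koranyiInvSq) p = fderiv ℝ g1 p := by
    apply Filter.EventuallyEq.fderiv_eq
    filter_upwards [hmem] with q hq using heisX_eq hq
  have hfy : fderiv ℝ (heisY koranyiInvSq) p = fderiv ℝ g2 p := by
    apply Filter.EventuallyEq.fderiv_eq
    filter_upwards [hmem] with q hq using heisY_eq hq
  have hA := ((((hx p).mul (hx p)).add ((hy p).mul (hy p))).mul (hx p)).add ((hy p).mul (ht p))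
  have hB := ((((hx p).mul (hx p)).add ((hy p).mul (hy p))).mul (hy p)).sub ((hx p).mul (ht p))
  have hg1 : fderiv ℝ g1 p = _ := (((hqf_rpow (-(3/2)) hp0).mul_const (-2)).mul hA).fderiv
  have hg2 : fderiv ℝ g2 p = _ := (((hqf_rpow (-(3/2)) hp0).mul_const (-2)).mul hB).fderiv
  have hXX : heisX (heisX koranyiInvSq) p
      = fderiv ℝ g1 p ((1 : ℂ), (0 : ℝ)) + 2 * p.1.im * fderiv ℝ g1 p ((0 : ℂ), (1 : ℝ)) := by
    rw [heisX, hfx]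
  have hYY : heisY (heisY koranyiInvSq) p
      = fderiv ℝ g2 p (Complex.I, (0 : ℝ)) - 2 * p.1.re * fderiv ℝ g2 p ((0 : ℂ), (1 : ℝ)) := by
    rw [heisY, hfy]
  rw [hXX, hYY, hg1, hg2]
  simp only [dqL, ContinuousLinearMap.add_apply, ContinuousLinearMap.smul_apply, ContinuousLinearMap.sub_apply,
    ContinuousLinearMap.coe_smul', Pi.smul_apply, dxL_apply, dyL_apply, dtL_apply, smul_eq_mul,
    Complex.one_re, Complex.one_im, Complex.zero_re, Complex.zero_im, Complex.I_re, Complex.I_im, Pi.mul_apply, Pi.add_apply, Pi.sub_apply]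
  set u := qf p ^ (-(3/2):ℝ) with hu
  set v := qf p ^ (-(3/2) - 1 :ℝ) with hv
  have hvu : u = v * qf p := by
    rw [hu, hv, ← Real.rpow_add_one (qf_pos hp0).ne']
    norm_num
  rw [qf] at hvu
  linear_combination (-12 * (p.1.re * p.1.re + p.1.im * p.1.im)) * hvu
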